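/- Suppose a UL 0-chain a : Λ → 𝔡_ℓ satisfies ∑_{j∈Λ} a_j^Y = 0 for every brick Y ∈ 𝔅_d. Define b_{jk} := ∑_{Y∈𝔅_d} (χ_Y(j)/|Y∩Λ|)·a_k^Y − ∑_{Y∈𝔅_d} (χ_Y(k)/|Y∩Λ|)·a_j^Y for j, k ∈ Λ. Then b is a skew-symmetric UL 1-chain and (∂b)_j = ∑_{k∈Λ} b_{kj} = a_j for all j ∈ Λ. Consequently, the zeroth homology of the UL Noether complex augmented by ∂_0 vanishes: any 0-chain with ∂_0 a = 0 is a boundary. -/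
import Mathlib


/-- If a uniformly local 0-chain `a` satisfies `∑_j a_j^Y = 0` for every brick `Y`,
then `b_{jk} := ∑_Y (χ_Y(j)/|Y∩Λ|) • a_k^Y − ∑_Y (χ_Y(k)/|Y∩Λ|) • a_j^Y` is a
skew-symmetric 1-chain with `(∂b)_j = ∑_k b_{kj} = a_j`; hence any 0-cycle of the
augmented uniformly local Noether complex is a boundary.  Here `w Y j` encodes
`χ_Y(j)/|Y∩Λ|` and `P Y` the brick-component projections (`a^Y_j = P Y (a j)`). -/
theorem stmt_15 {Λ B V : Type*} [AddCommGroup V] [Module ℝ V]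
    (w : B → Λ → ℝ) (P : B → V →ₗ[ℝ] V)
    (hw_fin : ∀ Y : B, (Function.support (w Y)).Finite)
    (hw_sum : ∀ Y : B, (∑ᶠ j : Λ, w Y j) = 1)
    (hP_fin : ∀ v : V, (Function.support fun Y : B => P Y v).Finite)
    (hP_sum : ∀ v : V, (∑ᶠ Y : B, P Y v) = v)
    (a : Λ → V)
    (ha_fin : ∀ Y : B, (Function.support fun j : Λ => P Y (a j)).Finite)
    (hpair : ∀ j : Λ,
      (Function.support fun p : Λ × B => w p.2 j • P p.2 (a p.1)).Finite)
    (hcycle : ∀ Y : B, (∑ᶠ j : Λ, P Y (a j)) = 0)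
    (b : Λ → Λ → V)
    (hb : ∀ j k : Λ,
      b j k = (∑ᶠ Y : B, w Y j • P Y (a k)) - ∑ᶠ Y : B, w Y k • P Y (a j)) :
    (∀ j k : Λ, b j k = - b k j) ∧ (∀ j : Λ, (∑ᶠ k : Λ, b k j) = a j) := by
  constructor
  · intro j k
    rw [hb, hb]
    abel
  · intro j
    -- finsets capturing supports
    set S : Finset B := (hP_fin (a j)).toFinset with hS
    set T : Finset B := ((hpair j).image Prod.snd).toFinset with hT
    -- Term 1: k ↦ ∑ᶠ Y, w Y k • P Y (a j), rewritten as a finite sum over S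
    have hterm1 : ∀ k : Λ, (∑ᶠ Y : B, w Y k • P Y (a j))
        = ∑ Y ∈ S, w Y k • P Y (a j) := by
      intro k
      refine finsum_eq_finset_sum_of_support_subset _ ?_
      intro Y hY
      have : P Y (a j) ≠ 0 := by
        intro h0
        apply hY
        simp [h0]
      simpa [hS] using this
    -- Term 2 support
    have hterm2supp : (Function.support fun k : Λ => ∑ᶠ Y : B, w Y j • P Y (a k)).Finite := by
      refine Set.Finite.subset ((hpair j).image Prod.fst) ?_
      intro k hk
      have : ∃ Y : B, w Y j • P Y (a k) ≠ 0 := by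
        by_contra h
        push_neg at h
        exact hk (finsum_eq_zero_of_forall_eq_zero h)
      rcases this with ⟨Y, hY⟩
      exact ⟨(k, Y), hY, rfl⟩
    have hterm1supp : (Function.support fun k : Λ => ∑ Y ∈ S, w Y k • P Y (a j)).Finite := by
      refine Set.Finite.subset (Set.Finite.biUnion S.finite_toSet
        (fun Y _ => hw_fin Y)) ?_
      intro k hk
      have : ∃ Y ∈ S, w Y k • P Y (a j) ≠ 0 := by
        by_contra h
        push_neg at h
        exact hk (Finset.sum_eq_zero h)
      rcases this with ⟨Y, hYS, hY⟩
      have hwk : w Y k ≠ 0 := by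
        intro h0; exact hY (by simp [h0])
      exact Set.mem_biUnion hYS hwk
    -- split the sum
    have hsplit : (∑ᶠ k : Λ, b k j)
        = (∑ᶠ k : Λ, ∑ Y ∈ S, w Y k • P Y (a j))
          - ∑ᶠ k : Λ, ∑ᶠ Y : B, w Y j • P Y (a k) := by
      rw [← finsum_sub_distrib hterm1supp hterm2supp]
      exact finsum_congr fun k => by rw [hb k j, hterm1 k]
    rw [hsplit]
    -- first part equals a j
    have h1 : (∑ᶠ k : Λ, ∑ Y ∈ S, w Y k • P Y (a j)) = a j := by
      rw [finsum_sum_comm S _ (fun Y _ => (hw_fin Y).subset (fun k hk => by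
        intro h0; exact hk (by simp [h0])))]
      have : ∀ Y ∈ S, (∑ᶠ k : Λ, w Y k • P Y (a j)) = P Y (a j) := by
        intro Y _
        rw [← finsum_smul' (hw_fin Y), hw_sum Y, one_smul]
      rw [Finset.sum_congr rfl this, ← finsum_eq_sum _ (hP_fin (a j)), hP_sum]
    -- second part equals 0
    have h2 : (∑ᶠ k : Λ, ∑ᶠ Y : B, w Y j • P Y (a k)) = 0 := by
      have hin : ∀ k : Λ, (∑ᶠ Y : B, w Y j • P Y (a k))
          = ∑ Y ∈ T, w Y j • P Y (a k) := by
        intro k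
        refine finsum_eq_finset_sum_of_support_subset _ ?_
        intro Y hY
        simp only [hT, Set.Finite.coe_toFinset]
        exact ⟨(k, Y), hY, rfl⟩
      rw [finsum_congr hin,
        finsum_sum_comm T _ (fun Y _ => (ha_fin Y).subset (fun k hk => by
          intro h0; exact hk (by simp [h0])))]
      refine Finset.sum_eq_zero fun Y _ => ?_
      rw [← smul_finsum' (w Y j) (ha_fin Y), hcycle Y, smul_zero]
    rw [h1, h2, sub_zero]
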